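/- For ξ ∈ ℝ let c(ξ) := 1/(2 − ξ² − 3iξ), f₊(x,ξ) := c(ξ)·(D₂*(D₁*(e_ξ)))(x) with e_ξ(x) = e^{ixξ}, and f₋(x,ξ) := c(ξ)·(D₂*(D₁*(e_{-ξ})))(x). Then the Wronskian W(ξ)(x) := f₊(x,ξ)·∂ₓf₋(x,ξ) − ∂ₓf₊(x,ξ)·f₋(x,ξ) is independent of x, and with the transmission coefficient T(ξ) := (ξ² − 2 + 3iξ)/(ξ² − 2 − 3iξ) one has T(ξ)·W(ξ) = −2iξ for every ξ ∈ ℝ; moreover |T(ξ)| = 1 for all ξ ∈ ℝ. -/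

import Mathlib

noncomputable section

/-- `sech x = 1 / cosh x`. -/
def sech (x : ℝ) : ℝ := 1 / Real.cosh x

/-- `D₁* f = −f' + tanh · f`. -/
def D1s (f : ℝ → ℂ) (x : ℝ) : ℂ := -(deriv f x) + (Real.tanh x : ℂ) * f x

/-- `D₂* f = −f' + 2 tanh · f`. -/
def D2s (f : ℝ → ℂ) (x : ℝ) : ℂ := -(deriv f x) + 2 * (Real.tanh x : ℂ) * f x

/-- `c(ξ) = 1/(2 − ξ² − 3iξ)`. -/
def cJost (ξ : ℝ) : ℂ := (2 - (ξ : ℂ) ^ 2 - 3 * Complex.I * (ξ : ℂ))⁻¹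

/-- The plane wave `e_ξ(x) = e^{ixξ}`. -/
def eexp (ξ : ℝ) : ℝ → ℂ := fun x => Complex.exp (Complex.I * (x : ℂ) * (ξ : ℂ))

/-- The Jost solution `f₊(·,ξ) = c(ξ) D₂*(D₁*(e^{i·ξ}))`. -/
def fplus (ξ : ℝ) : ℝ → ℂ := fun x => cJost ξ * D2s (D1s (eexp ξ)) x

/-- The Jost solution `f₋(·,ξ) = c(ξ) D₂*(D₁*(e^{-i·ξ}))`. -/
def fminus (ξ : ℝ) : ℝ → ℂ := fun x => cJost ξ * D2s (D1s (eexp (-ξ))) x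

/-- The Wronskian `W(ξ)(x) = f₊ ∂ₓ f₋ − ∂ₓ f₊ f₋`. -/
def Wron (ξ x : ℝ) : ℂ := fplus ξ x * deriv (fminus ξ) x - deriv (fplus ξ) x * fminus ξ x

/-- The transmission coefficient `T(ξ) = (ξ² − 2 + 3iξ)/(ξ² − 2 − 3iξ)`. -/
def Tcoef (ξ : ℝ) : ℂ :=
  ((ξ : ℂ) ^ 2 - 2 + 3 * Complex.I * (ξ : ℂ)) / ((ξ : ℂ) ^ 2 - 2 - 3 * Complex.I * (ξ : ℂ))

lemma hasDerivAt_tanhR (x : ℝ) : HasDerivAt Real.tanh (1 - Real.tanh x ^ 2) x := by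
  have h := (Real.hasDerivAt_sinh x).div (Real.hasDerivAt_cosh x) (ne_of_gt (Real.cosh_pos x))
  have hfun : (fun x => Real.sinh x / Real.cosh x) = Real.tanh := by
    funext y; rw [Real.tanh_eq_sinh_div_cosh]
  rw [show (Real.sinh / Real.cosh) = Real.tanh from hfun] at h
  refine h.congr_deriv ?_
  have h1 : Real.cosh x ^ 2 - Real.sinh x ^ 2 = 1 := Real.cosh_sq_sub_sinh_sq x
  have h2 : Real.cosh x ≠ 0 := ne_of_gt (Real.cosh_pos x)
  rw [Real.tanh_eq_sinh_div_cosh]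
  field_simp

lemma hasDerivAt_tanhC (x : ℝ) :
    HasDerivAt (fun y : ℝ => (Real.tanh y : ℂ)) (1 - (Real.tanh x : ℂ) ^ 2) x := by
  have := (hasDerivAt_tanhR x).ofReal_comp (z := x)
  convert this using 1
  push_cast
  ring

lemma hasDerivAt_eexp (ξ x : ℝ) : HasDerivAt (eexp ξ) (Complex.I * ξ * eexp ξ x) x := by
  have h1 : HasDerivAt (fun w : ℂ => Complex.I * w * (ξ : ℂ)) (Complex.I * ξ) (x : ℂ) := by
    simpa using ((hasDerivAt_id ((x : ℝ) : ℂ)).const_mul Complex.I).mul_const (ξ : ℂ)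
  have h2 := h1.cexp
  have h3 := h2.comp_ofReal
  exact h3.congr_deriv (by simp only [eexp]; ring)

lemma D1s_eexp (ξ : ℝ) :
    D1s (eexp ξ) = fun x => ((Real.tanh x : ℂ) - Complex.I * ξ) * eexp ξ x := by
  funext x
  rw [D1s, (hasDerivAt_eexp ξ x).deriv]
  ring

lemma F_eq (ξ : ℝ) : (fun x => D2s (D1s (eexp ξ)) x) = fun x =>
    (-1 - (ξ : ℂ) ^ 2 - 3 * Complex.I * ξ * (Real.tanh x : ℂ) + 3 * (Real.tanh x : ℂ) ^ 2)
      * eexp ξ x := by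
  funext x
  rw [D2s, D1s_eexp]
  have hd : HasDerivAt (fun x => ((Real.tanh x : ℂ) - Complex.I * ξ) * eexp ξ x)
      ((1 - (Real.tanh x : ℂ) ^ 2) * eexp ξ x
        + ((Real.tanh x : ℂ) - Complex.I * ξ) * (Complex.I * ξ * eexp ξ x)) x :=
    ((hasDerivAt_tanhC x).sub_const _).mul (hasDerivAt_eexp ξ x)
  rw [hd.deriv]
  have hI : (Complex.I : ℂ) ^ 2 = -1 := Complex.I_sq
  linear_combination (ξ : ℂ) ^ 2 * eexp ξ x * hI

lemma hasDerivAt_F (ξ x : ℝ) : HasDerivAt (fun x => D2s (D1s (eexp ξ)) x)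
    (((-(3 * Complex.I * ξ) + 6 * (Real.tanh x : ℂ)) * (1 - (Real.tanh x : ℂ) ^ 2)
      + (-1 - (ξ : ℂ) ^ 2 - 3 * Complex.I * ξ * (Real.tanh x : ℂ)
          + 3 * (Real.tanh x : ℂ) ^ 2) * (Complex.I * ξ)) * eexp ξ x) x := by
  rw [F_eq]
  have hT := hasDerivAt_tanhC x
  have h1 : HasDerivAt (fun y : ℝ => 3 * Complex.I * (ξ : ℂ) * (Real.tanh y : ℂ))
      (3 * Complex.I * (ξ : ℂ) * (1 - (Real.tanh x : ℂ) ^ 2)) x := hT.const_mul _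
  have h2 : HasDerivAt (fun y : ℝ => 3 * (Real.tanh y : ℂ) ^ 2)
      (6 * (Real.tanh x : ℂ) * (1 - (Real.tanh x : ℂ) ^ 2)) x := by
    have h := (hT.mul hT).const_mul (3 : ℂ)
    simp only [pow_two]
    exact h.congr_deriv (by ring)
  have hP : HasDerivAt (fun y : ℝ => -1 - (ξ : ℂ) ^ 2
        - 3 * Complex.I * ξ * (Real.tanh y : ℂ) + 3 * (Real.tanh y : ℂ) ^ 2)
      (-(3 * Complex.I * (ξ : ℂ) * (1 - (Real.tanh x : ℂ) ^ 2))
        + 6 * (Real.tanh x : ℂ) * (1 - (Real.tanh x : ℂ) ^ 2)) x :=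
    (h1.const_sub _).add h2
  have := hP.mul (hasDerivAt_eexp ξ x)
  exact this.congr_deriv (by push_cast; ring)

lemma deriv_fplus (ξ x : ℝ) : deriv (fplus ξ) x =
    cJost ξ * (((-(3 * Complex.I * ξ) + 6 * (Real.tanh x : ℂ)) * (1 - (Real.tanh x : ℂ) ^ 2)
      + (-1 - (ξ : ℂ) ^ 2 - 3 * Complex.I * ξ * (Real.tanh x : ℂ)
          + 3 * (Real.tanh x : ℂ) ^ 2) * (Complex.I * ξ)) * eexp ξ x) := by
  unfold fplus
  exact ((hasDerivAt_F ξ x).const_mul (cJost ξ)).deriv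

lemma fplus_eval (ξ x : ℝ) : fplus ξ x =
    cJost ξ * ((-1 - (ξ : ℂ) ^ 2 - 3 * Complex.I * ξ * (Real.tanh x : ℂ)
      + 3 * (Real.tanh x : ℂ) ^ 2) * eexp ξ x) := by
  unfold fplus
  simp only [congrFun (F_eq ξ) x]

lemma neg_cast (ξ : ℝ) : ((-ξ : ℝ) : ℂ) = -(ξ : ℂ) := by push_cast; ring

lemma deriv_fminus (ξ x : ℝ) : deriv (fminus ξ) x =
    cJost ξ * (((3 * Complex.I * ξ + 6 * (Real.tanh x : ℂ)) * (1 - (Real.tanh x : ℂ) ^ 2)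
      + (-1 - (ξ : ℂ) ^ 2 + 3 * Complex.I * ξ * (Real.tanh x : ℂ)
          + 3 * (Real.tanh x : ℂ) ^ 2) * (-(Complex.I * ξ))) * eexp (-ξ) x) := by
  unfold fminus
  rw [((hasDerivAt_F (-ξ) x).const_mul (cJost ξ)).deriv]
  rw [neg_cast]
  ring

lemma fminus_eval (ξ x : ℝ) : fminus ξ x =
    cJost ξ * ((-1 - (ξ : ℂ) ^ 2 + 3 * Complex.I * ξ * (Real.tanh x : ℂ)
      + 3 * (Real.tanh x : ℂ) ^ 2) * eexp (-ξ) x) := by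
  unfold fminus
  simp only [congrFun (F_eq (-ξ)) x]
  rw [neg_cast]
  ring

lemma Wron_val (ξ x : ℝ) : Wron ξ x =
    -2 * Complex.I * ξ * cJost ξ ^ 2 * ((ξ : ℂ) ^ 4 + 5 * (ξ : ℂ) ^ 2 + 4) := by
  have hE : eexp ξ x * eexp (-ξ) x = 1 := by
    rw [eexp, eexp, ← Complex.exp_add, ← Complex.exp_zero]
    congr 1
    push_cast
    ring
  have hI : (Complex.I : ℂ) ^ 2 = -1 := Complex.I_sq
  rw [Wron, deriv_fplus, deriv_fminus, fplus_eval, fminus_eval]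
  set t := (Real.tanh x : ℂ)
  set a := (ξ : ℂ)
  set c := cJost ξ
  set E := eexp ξ x
  set F := eexp (-ξ) x
  linear_combination (c ^ 2 * ((-1 - a ^ 2 - 3 * Complex.I * a * t + 3 * t ^ 2) *
      ((3 * Complex.I * a + 6 * t) * (1 - t ^ 2)
        + (-1 - a ^ 2 + 3 * Complex.I * a * t + 3 * t ^ 2) * (-(Complex.I * a)))
      - ((-(3 * Complex.I * a) + 6 * t) * (1 - t ^ 2)
        + (-1 - a ^ 2 - 3 * Complex.I * a * t + 3 * t ^ 2) * (Complex.I * a)) *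
        (-1 - a ^ 2 + 3 * Complex.I * a * t + 3 * t ^ 2))) * hE
    + (18 * Complex.I * a ^ 3 * t ^ 2 * c ^ 2) * hI

lemma denom_ne' (ξ : ℝ) : (2 - (ξ : ℂ) ^ 2 - 3 * Complex.I * (ξ : ℂ)) ≠ 0 := by
  intro h
  have him := congrArg Complex.im h
  have hre := congrArg Complex.re h
  simp [Complex.ext_iff, pow_two, Complex.mul_im, Complex.mul_re] at him hre
  nlinarith [him, hre]

lemma denom_ne (ξ : ℝ) : ((ξ : ℂ) ^ 2 - 2 - 3 * Complex.I * (ξ : ℂ)) ≠ 0 := by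
  intro h
  have him := congrArg Complex.im h
  have hre := congrArg Complex.re h
  simp [Complex.ext_iff, pow_two, Complex.mul_im, Complex.mul_re] at him hre
  nlinarith [him, hre]

/-- The Wronskian is constant in `x`, the relation `T(ξ) W(ξ) = −2iξ`, and `|T(ξ)| = 1`. -/
theorem wronskian_transmission :
    (∀ ξ x y : ℝ, Wron ξ x = Wron ξ y) ∧
      (∀ ξ x : ℝ, Tcoef ξ * Wron ξ x = -2 * Complex.I * (ξ : ℂ)) ∧
      ∀ ξ : ℝ, ‖Tcoef ξ‖ = 1 := by
  have hI : (Complex.I : ℂ) ^ 2 = -1 := Complex.I_sq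
  refine ⟨fun ξ x y => by rw [Wron_val, Wron_val], fun ξ x => ?_, fun ξ => ?_⟩
  · have hd1 := denom_ne ξ
    have hd2 := denom_ne' ξ
    have key : ((ξ : ℂ) ^ 2 - 2 - 3 * Complex.I * ξ) * (2 - (ξ : ℂ) ^ 2 - 3 * Complex.I * ξ)
        = -((ξ : ℂ) ^ 4 + 5 * (ξ : ℂ) ^ 2 + 4) := by
      linear_combination (9 * (ξ : ℂ) ^ 2) * hI
    have hW : Wron ξ x = -2 * Complex.I * ξ * ((ξ : ℂ) ^ 4 + 5 * (ξ : ℂ) ^ 2 + 4)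
        / (2 - (ξ : ℂ) ^ 2 - 3 * Complex.I * ξ) ^ 2 := by
      rw [Wron_val, cJost, inv_pow, div_eq_mul_inv]; ring
    rw [hW, Tcoef, div_mul_div_comm, div_eq_iff (mul_ne_zero hd1 (pow_ne_zero 2 hd2))]
    linear_combination (2 * Complex.I * (ξ : ℂ) * (2 - (ξ : ℂ) ^ 2 - 3 * Complex.I * ξ)) * key
  · have hd1 := denom_ne ξ
    have hconj : (starRingEnd ℂ) ((ξ : ℂ) ^ 2 - 2 - 3 * Complex.I * (ξ : ℂ))
        = (ξ : ℂ) ^ 2 - 2 + 3 * Complex.I * (ξ : ℂ) := by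
      simp [map_sub, map_mul, map_pow, map_ofNat, Complex.conj_ofReal, Complex.conj_I]
    rw [Tcoef, norm_div, ← hconj, Complex.norm_conj, div_self]
    exact norm_ne_zero_iff.mpr hd1
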